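/- Let X be a pseudocompact Hausdorff topological space (i.e., every continuous function f : X → ℝ is bounded) such that for every countable set A ⊆ X there exists a continuous mapping φ : C_p*(A) → C_p(X) with φ(y)|_A = y for every y ∈ C_p*(A). Then X is finite. -/

import Mathlib

open Set Topology

/-- `C_p(X)`: the continuous real-valued functions on `X`, topologized by pointwise
convergence (i.e. as a subspace of `X → ℝ` with the product topology). -/
abbrev Cp (X : Type*) [TopologicalSpace X] : Type _ := {f : X → ℝ // Continuous f}

/-- `C_p*(X)`: the bounded continuous real-valued functions on `X`, topologized by
pointwise convergence. -/
abbrev CpStar (X : Type*) [TopologicalSpace X] : Type _ :=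
  {f : X → ℝ // Continuous f ∧ ∃ M : ℝ, ∀ x, |f x| ≤ M}

/-- A set is functionally open (a cozero set) if it is the cozero set of a
continuous real-valued function. -/
def FunctionallyOpen {X : Type*} [TopologicalSpace X] (U : Set X) : Prop :=
  ∃ f : X → ℝ, Continuous f ∧ U = f ⁻¹' ({0}ᶜ)

/-- A subset `A` is strongly functionally discrete in `X` if there is a family of
functionally open sets `G a ∋ a` (for `a ∈ A`) which is discrete in `X`: every point
of `X` has a neighborhood meeting `G a` for at most one `a ∈ A`. -/
def StronglyFunctionallyDiscrete {X : Type*} [TopologicalSpace X] (A : Set X) : Prop :=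
  ∃ G : A → Set X,
    (∀ a : A, (a : X) ∈ G a) ∧
    (∀ a : A, FunctionallyOpen (G a)) ∧
    (∀ x : X, ∃ V ∈ 𝓝 x, {a : A | (V ∩ G a).Nonempty}.Subsingleton)

open Filter

/-- In an infinite Hausdorff space there is a "relatively discrete" injective sequence. -/
lemma exists_discrete_seq {X : Type*} [TopologicalSpace X] [T2Space X] [Infinite X] :
    ∃ a : ℕ → X, Function.Injective a ∧
      ∀ n, ∃ V : Set X, IsOpen V ∧ a n ∈ V ∧ ∀ m, m ≠ n → a m ∉ V := by
  have key : ∀ Y : Set X, Y.Infinite → ∃ x, ∃ U : Set X,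
      x ∈ Y ∧ IsOpen U ∧ x ∈ U ∧ (Y \ U).Infinite := by
    intro Y hY
    obtain ⟨x, hx, y, hy, hxy⟩ := hY.nontrivial
    obtain ⟨U, V, hU, hV, hxU, hyV, hdUV⟩ := t2_separation hxy
    have hsub : Y ⊆ (Y \ U) ∪ (Y \ V) := by
      intro z hz
      by_cases hzU : z ∈ U
      · exact Or.inr ⟨hz, fun hzV => (Set.disjoint_left.mp hdUV hzU) hzV⟩
      · exact Or.inl ⟨hz, hzU⟩
    rcases Set.infinite_union.mp (hY.mono hsub) with h1 | h1
    · exact ⟨x, U, hx, hU, hxU, h1⟩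
    · exact ⟨y, V, hy, hV, hyV, h1⟩
  choose pt op hmem hop hptop hinf using key
  let S : ℕ → {Y : Set X // Y.Infinite} := fun n =>
    Nat.rec ⟨Set.univ, Set.infinite_univ⟩
      (fun _ p => ⟨p.1 \ op p.1 p.2, hinf p.1 p.2⟩) n
  set a : ℕ → X := fun n => pt (S n).1 (S n).2 with ha
  set U : ℕ → Set X := fun n => op (S n).1 (S n).2 with hU
  have hSsucc : ∀ n, (S (n + 1)).1 = (S n).1 \ U n := fun n => rfl
  have hSmono : ∀ n m, n ≤ m → (S m).1 ⊆ (S n).1 := by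
    intro n m hnm
    induction m with
    | zero => simp_all
    | succ k ih =>
      rcases Nat.lt_or_ge n (k + 1) with hlt | hge
      · have hsub : (S (k + 1)).1 ⊆ (S k).1 := by rw [hSsucc]; exact Set.diff_subset
        exact hsub.trans (ih (Nat.lt_succ_iff.mp hlt))
      · have he : n = k + 1 := le_antisymm hnm hge
        subst he; exact subset_rfl
  have haS : ∀ n, a n ∈ (S n).1 := fun n => hmem _ _
  have haU : ∀ n, a n ∈ U n := fun n => hptop _ _
  have hUopen : ∀ n, IsOpen (U n) := fun n => hop _ _
  have hnotU : ∀ n m, n < m → a m ∉ U n := by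
    intro n m hnm hmU
    have hss : a m ∈ (S (n + 1)).1 := hSmono (n + 1) m hnm (haS m)
    rw [hSsucc] at hss
    exact hss.2 hmU
  have hinj : Function.Injective a := by
    intro n m hnm
    by_contra hne
    rcases Ne.lt_or_gt hne with hlt | hlt
    · exact hnotU n m hlt (hnm ▸ haU n)
    · exact hnotU m n hlt (hnm ▸ haU m)
  refine ⟨a, hinj, fun n => ?_⟩
  refine ⟨U n \ a '' {m | m < n}, ?_, ⟨haU n, ?_⟩, ?_⟩
  · exact (hUopen n).sdiff (((Set.finite_Iio n).image a).isClosed)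
  · rintro ⟨m, hm, hmn⟩
    exact absurd (hinj hmn) (Nat.ne_of_lt hm)
  · rintro m hmn ⟨hmU, hmim⟩
    rcases Nat.lt_or_ge n m with hlt | hge
    · exact hnotU n m hlt hmU
    · refine hmim ⟨m, ?_, rfl⟩
      exact lt_of_le_of_ne hge hmn

lemma discrete_range {X : Type*} [TopologicalSpace X] [T1Space X]
    {a : ℕ → X} (hinj : Function.Injective a)
    (hV : ∀ n, ∃ V : Set X, IsOpen V ∧ a n ∈ V ∧ ∀ m, m ≠ n → a m ∉ V) :
    DiscreteTopology ↥(Set.range a) := by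
  rw [discreteTopology_iff_isOpen_singleton]
  rintro ⟨x, hx⟩
  obtain ⟨n, rfl⟩ := hx
  obtain ⟨V, hVo, haV, hother⟩ := hV n
  have hset : ({⟨a n, ⟨n, rfl⟩⟩} : Set ↥(Set.range a)) = Subtype.val ⁻¹' V := by
    ext ⟨u, hu⟩
    obtain ⟨m, rfl⟩ := hu
    simp only [Set.mem_singleton_iff, Set.mem_preimage, Subtype.mk.injEq]
    constructor
    · intro he; rw [Subtype.mk.inj he]; exact haV
    · intro hmV
      by_contra hne
      refine hother m ?_ hmV
      intro e
      exact hne (Subtype.ext (congrArg a e))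
  rw [hset]
  exact hVo.preimage continuous_subtype_val

open Classical in
/-- Auxiliary family of functions on the range of `a`:
`none` is the zero function, `some G` is the indicator of the complement of `a '' G`. -/
noncomputable def auxFun {X : Type*} (a : ℕ → X) (t : Option (Finset ℕ)) :
    ↥(Set.range a) → ℝ :=
  match t with
  | none => fun _ => 0
  | some G => fun x => if ∃ i ∈ G, (x : X) = a i then 0 else 1

open Classical in
lemma auxFun_abs_le {X : Type*} (a : ℕ → X) (t : Option (Finset ℕ)) (x : ↥(Set.range a)) :
    |auxFun a t x| ≤ 1 := by
  match t with
  | none => simp [auxFun]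
  | some G =>
    show |(if ∃ i ∈ G, (x : X) = a i then (0:ℝ) else 1)| ≤ 1
    split <;> simp

lemma auxFun_none {X : Type*} (a : ℕ → X) (x : ↥(Set.range a)) :
    auxFun a none x = 0 := rfl

open Classical in
lemma auxFun_some_pos {X : Type*} (a : ℕ → X) (G : Finset ℕ) (x : ↥(Set.range a))
    (h : ∃ i ∈ G, (x : X) = a i) : auxFun a (some G) x = 0 := by
  show (if ∃ i ∈ G, (x : X) = a i then (0:ℝ) else 1) = 0
  exact if_pos h

open Classical in
lemma auxFun_some_neg {X : Type*} (a : ℕ → X) (G : Finset ℕ) (x : ↥(Set.range a))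
    (h : ¬ ∃ i ∈ G, (x : X) = a i) : auxFun a (some G) x = 1 := by
  show (if ∃ i ∈ G, (x : X) = a i then (0:ℝ) else 1) = 1
  exact if_neg h

/-- If `X` is a pseudocompact Hausdorff space and for every countable `A ⊆ X` there is
a continuous extender `C_p*(A) → C_p(X)`, then `X` is finite. -/
theorem stmt_8 {X : Type*} [TopologicalSpace X] [T2Space X]
    (hpc : ∀ f : X → ℝ, Continuous f → ∃ M : ℝ, ∀ x, |f x| ≤ M)
    (h : ∀ A : Set X, A.Countable → ∃ φ : CpStar A → Cp X, Continuous φ ∧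
      ∀ y : CpStar A, ∀ a : A, (φ y).1 a = y.1 a) :
    Finite X := by
  by_contra hfin
  haveI : Infinite X := not_finite_iff_infinite.mp hfin
  obtain ⟨a, hinj, hV⟩ := exists_discrete_seq (X := X)
  haveI : DiscreteTopology ↥(Set.range a) := discrete_range hinj hV
  obtain ⟨φ, hφc, hφext⟩ := h (Set.range a) (Set.countable_range a)
  -- the family of test functions, as elements of CpStar (range a)
  set ys : Option (Finset ℕ) → CpStar (Set.range a) :=
    (fun t => ⟨auxFun a t, continuous_of_discreteTopology, 1, auxFun_abs_le a t⟩) with hys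
  have hys1 : ∀ t, (ys t).1 = auxFun a t := fun t => rfl
  -- the map H : X → ℝ^I
  set H : X → (Option (Finset ℕ) → ℝ) := fun x t => (φ (ys t)).1 x with hH
  have hHc : Continuous H := continuous_pi fun t => (φ (ys t)).2
  -- pointwise bounds from pseudocompactness
  choose M hM using fun t => hpc ((φ (ys t)).1) ((φ (ys t)).2)
  have hK : IsCompact (Set.univ.pi fun t => Set.Icc (-(M t)) (M t)) :=
    isCompact_univ_pi fun t => isCompact_Icc
  have hmemK : ∀ n, H (a n) ∈ (Set.univ.pi fun t => Set.Icc (-(M t)) (M t)) := by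
    intro n
    rw [Set.mem_univ_pi]
    intro t
    have hb := hM t (a n)
    rw [abs_le] at hb
    exact ⟨hb.1, hb.2⟩
  obtain ⟨z, hzK, σ, hσ, hconv⟩ := hK.tendsto_subseq hmemK
  have hcoord : ∀ t, Tendsto (fun j => H (a (σ j)) t) atTop (𝓝 (z t)) :=
    fun t => (tendsto_pi_nhds.mp hconv t)
  have hmemA : ∀ n, a n ∈ Set.range a := fun n => ⟨n, rfl⟩
  -- the extender property pinned down
  have hval : ∀ n t, H (a n) t = auxFun a t ⟨a n, hmemA n⟩ := by
    intro n t
    exact hφext (ys t) ⟨a n, hmemA n⟩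
  have hz_none : z none = 0 := by
    refine tendsto_nhds_unique (hcoord none) ?_
    refine Tendsto.congr' ?_ tendsto_const_nhds
    filter_upwards with j
    rw [hval, auxFun_none]
  have hz_some : ∀ G : Finset ℕ, z (some G) = 1 := by
    intro G
    refine tendsto_nhds_unique (hcoord (some G)) ?_
    refine Tendsto.congr' ?_ tendsto_const_nhds
    filter_upwards [eventually_ge_atTop (G.sup id + 1)] with j hj
    rw [hval]
    refine (auxFun_some_neg a G _ ?_).symm
    rintro ⟨i, hiG, hieq⟩
    have he : σ j = i := hinj hieq
    have hle : i ≤ G.sup id := Finset.le_sup (f := id) hiG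
    have hja : j ≤ σ j := hσ.le_apply
    omega
  by_cases hzr : ∃ x, H x = z
  · -- main case: the limit is H x₀; contradiction with continuity of the extender at 0
    obtain ⟨x₀, hx₀⟩ := hzr
    set Φ : CpStar (Set.range a) → ℝ := fun y => (φ y).1 x₀ with hΦ
    have hΦc : Continuous Φ :=
      ((continuous_apply x₀).comp continuous_subtype_val).comp hφc
    have htend : Tendsto (fun G : Finset ℕ => ys (some G)) atTop (𝓝 (ys none)) := by
      rw [tendsto_subtype_rng]
      rw [tendsto_pi_nhds]
      intro x
      have h0 : ((ys none : CpStar (Set.range a)) : ↥(Set.range a) → ℝ) x = 0 := rfl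
      rw [h0]
      obtain ⟨i₀, hi₀⟩ := x.2
      refine Tendsto.congr' ?_ tendsto_const_nhds
      filter_upwards [eventually_ge_atTop ({i₀} : Finset ℕ)] with G hG
      have hcond : ∃ i ∈ G, (x : X) = a i :=
        ⟨i₀, hG (Finset.mem_singleton_self i₀), hi₀.symm⟩
      exact (auxFun_some_pos a G x hcond).symm
    have h1 : Tendsto (fun G : Finset ℕ => Φ (ys (some G))) atTop (𝓝 (Φ (ys none))) :=
      (hΦc.tendsto _).comp htend
    have he1 : ∀ G : Finset ℕ, Φ (ys (some G)) = 1 := by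
      intro G
      have hr : Φ (ys (some G)) = H x₀ (some G) := rfl
      rw [hr, hx₀, hz_some]
    have he0 : Φ (ys none) = 0 := by
      have hr : Φ (ys none) = H x₀ none := rfl
      rw [hr, hx₀, hz_none]
    rw [he0] at h1
    have h2 : Tendsto (fun _ : Finset ℕ => (1 : ℝ)) atTop (𝓝 0) := by
      refine h1.congr ?_
      intro G; rw [he1]
    exact one_ne_zero (tendsto_nhds_unique tendsto_const_nhds h2)
  · -- otherwise: z is not in the (pseudocompact) image, build an unbounded function
    push_neg at hzr
    letI : MetricSpace (Option (Finset ℕ) → ℝ) :=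
      TopologicalSpace.metrizableSpaceMetric _
    have hd0 : ∀ x, dist (H x) z ≠ 0 := fun x hd =>
      hzr x (by rwa [dist_eq_zero] at hd)
    have hFc : Continuous fun x => (dist (H x) z)⁻¹ :=
      ((hHc.dist continuous_const).inv₀ hd0)
    obtain ⟨M₀, hM₀⟩ := hpc _ hFc
    have hM₀pos : 0 < M₀ + 1 := by
      have hb := hM₀ (a 0)
      have hb2 : (0:ℝ) ≤ M₀ := le_trans (abs_nonneg _) hb
      linarith
    have hdist : Tendsto (fun j => dist (H (a (σ j))) z) atTop (𝓝 0) := by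
      have hc := hconv.dist (tendsto_const_nhds (x := z))
      simpa using hc
    have hev : ∀ᶠ j in atTop, dist (H (a (σ j))) z < (M₀ + 1)⁻¹ :=
      hdist.eventually (eventually_lt_nhds (inv_pos.mpr hM₀pos))
    obtain ⟨j, hj⟩ := hev.exists
    have hdp : 0 < dist (H (a (σ j))) z :=
      lt_of_le_of_ne dist_nonneg (Ne.symm (hd0 _))
    have hb := hM₀ (a (σ j))
    rw [abs_of_nonneg (le_of_lt (inv_pos.mpr hdp))] at hb
    have hlt : M₀ + 1 < (dist (H (a (σ j))) z)⁻¹ := by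
      rw [← inv_inv (M₀ + 1)]
      exact inv_strictAnti₀ hdp hj
    linarith
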